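/- Let p be a stochastic matrix on a nonempty finite set S, and suppose E ∈ ℰ and M ∈ 𝒫 satisfy p = α(p)·E + (1−α(p))·M. If α(p) < 1, then α(M) = 0; equivalently, M has a zero entry in each of its columns. -/
import Mathlib


/-- A stochastic matrix on a finite set `S`: nonnegative entries, each row sums to 1. -/
def IsStochastic {S : Type*} [Fintype S] (p : Matrix S S ℝ) : Prop :=
  (∀ i j, 0 ≤ p i j) ∧ ∀ i, ∑ j, p i j = 1

/-- A matrix all of whose rows are identical. -/
def IsConstRow {S : Type*} (E : Matrix S S ℝ) : Prop :=
  ∀ i i' j, E i j = E i' j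

/-- Doeblin's ergodicity coefficient `α(p) = Σ_j min_i p(i,j)`. -/
noncomputable def doeblin {S : Type*} [Fintype S] [Nonempty S] (p : Matrix S S ℝ) : ℝ :=
  ∑ j, Finset.univ.inf' Finset.univ_nonempty fun i => p i j

theorem doeblin_remainder_coeff_zero {S : Type*} [Fintype S] [Nonempty S]
    (p E M : Matrix S S ℝ) (hp : IsStochastic p)
    (hE : IsStochastic E) (hErow : IsConstRow E) (hM : IsStochastic M)
    (hdec : p = doeblin p • E + (1 - doeblin p) • M)
    (hlt : doeblin p < 1) :
    doeblin M = 0 ∧ ∀ j, ∃ i, M i j = 0 := by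
  set a := doeblin p with ha
  have ht : (0:ℝ) < 1 - a := by linarith
  obtain ⟨c⟩ := ‹Nonempty S›
  have hpij : ∀ i j, p i j = a * E i j + (1 - a) * M i j := by
    intro i j
    conv_lhs => rw [hdec]
    simp [Matrix.add_apply, Matrix.smul_apply, smul_eq_mul]
  -- column-wise inf identity
  have key : ∀ j, (Finset.univ.inf' Finset.univ_nonempty fun i => p i j)
      = a * E c j + (1 - a) * Finset.univ.inf' Finset.univ_nonempty (fun i => M i j) := by
    intro j
    apply le_antisymm
    · obtain ⟨i₀, -, hi₀⟩ := Finset.exists_mem_eq_inf' (Finset.univ_nonempty) (fun i => M i j)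
      calc (Finset.univ.inf' Finset.univ_nonempty fun i => p i j) ≤ p i₀ j :=
            Finset.inf'_le _ (Finset.mem_univ i₀)
        _ = a * E c j + (1 - a) * M i₀ j := by rw [hpij, hErow i₀ c j]
        _ = _ := by rw [← hi₀]
    · apply Finset.le_inf'
      intro i _
      have h1 : Finset.univ.inf' Finset.univ_nonempty (fun i => M i j) ≤ M i j :=
        Finset.inf'_le _ (Finset.mem_univ i)
      have := hErow c i j
      rw [hpij]
      nlinarith
  have hsum : a = a * (∑ j, E c j) + (1 - a) * doeblin M := by
    have : a = ∑ j, (a * E c j + (1 - a) * Finset.univ.inf' Finset.univ_nonempty (fun i => M i j)) := by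
      rw [ha]
      unfold doeblin
      exact Finset.sum_congr rfl fun j _ => key j
    conv_lhs => rw [this]
    rw [Finset.sum_add_distrib, ← Finset.mul_sum, ← Finset.mul_sum]
    rfl
  rw [hE.2 c, mul_one] at hsum
  have hdM : doeblin M = 0 := by
    have : (1 - a) * doeblin M = 0 := by linarith
    exact (mul_eq_zero.mp this).resolve_left (ne_of_gt ht)
  refine ⟨hdM, fun j => ?_⟩
  have hnn : ∀ j', 0 ≤ Finset.univ.inf' Finset.univ_nonempty (fun i => M i j') := by
    intro j'
    apply Finset.le_inf'
    intro i _
    exact hM.1 i j'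
  have hzero : Finset.univ.inf' Finset.univ_nonempty (fun i => M i j) = 0 := by
    have hsum0 : ∑ j', Finset.univ.inf' Finset.univ_nonempty (fun i => M i j') = 0 := hdM
    have := (Finset.sum_eq_zero_iff_of_nonneg (fun j' _ => hnn j')).mp hsum0 j (Finset.mem_univ j)
    exact this
  obtain ⟨i₀, -, hi₀⟩ := Finset.exists_mem_eq_inf' (Finset.univ_nonempty) (fun i => M i j)
  exact ⟨i₀, by rw [← hi₀, hzero]⟩
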